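/- Let G be a finite group, H a subgroup of G, and let K = Z(G)·H be the subgroup generated by the center Z(G) of G together with H. Assume K is normal in G and the quotient group G/K is cyclic. Then every irreducible finite-dimensional complex representation π of G restricts to H without multiplicity: for every irreducible finite-dimensional complex representation ρ of H, dim Hom_H(ρ, Res_H π) ≤ 1. -/

import Mathlib

noncomputable section

namespace RestrictionMult

variable {G : Type*} [Group G]

/-- The submodule of equivariant linear maps between two representations. -/
def equivariantHoms {V W : Type*} [AddCommGroup V] [Module ℂ V]
    [AddCommGroup W] [Module ℂ W]
    (π : Representation ℂ G V) (σ : Representation ℂ G W) :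
    Submodule ℂ (V →ₗ[ℂ] W) where
  carrier := {f | ∀ g v, f (π g v) = σ g (f v)}
  add_mem' := by intro f₁ f₂ h₁ h₂ g v; simp [h₁ g v, h₂ g v]
  zero_mem' := by intro g v; simp
  smul_mem' := by intro c f hf g v; simp [hf g v]

/-- Two representations are equivalent (isomorphic). -/
def IsRepEquiv {V W : Type*} [AddCommGroup V] [Module ℂ V]
    [AddCommGroup W] [Module ℂ W]
    (π : Representation ℂ G V) (σ : Representation ℂ G W) : Prop :=
  ∃ e : V ≃ₗ[ℂ] W, ∀ g v, e (π g v) = σ g (e v)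

/-- A representation is irreducible if the space is nonzero and the only invariant
submodules are `⊥` and `⊤`. -/
def IsIrreducibleRep {V : Type*} [AddCommGroup V] [Module ℂ V]
    (π : Representation ℂ G V) : Prop :=
  (∃ v : V, v ≠ 0) ∧
    ∀ U : Submodule ℂ V, (∀ g, ∀ v ∈ U, π g v ∈ U) → U = ⊥ ∨ U = ⊤

/-- The twist of a representation by a character `χ : G →* ℂˣ`. -/
def twist {V : Type*} [AddCommGroup V] [Module ℂ V]
    (π : Representation ℂ G V) (χ : G →* ℂˣ) : Representation ℂ G V where
  toFun g := (χ g : ℂ) • π g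
  map_one' := by simp
  map_mul' g h := by
    ext v
    simp only [Module.End.mul_apply, LinearMap.smul_apply, map_smul, map_mul, Units.val_mul,
      mul_smul]
    rw [smul_comm]

/-- The direct sum of two representations. -/
def dsum {V W : Type*} [AddCommGroup V] [Module ℂ V]
    [AddCommGroup W] [Module ℂ W]
    (π : Representation ℂ G V) (σ : Representation ℂ G W) :
    Representation ℂ G (V × W) where
  toFun g := (π g).prodMap (σ g)
  map_one' := by ext v <;> simp
  map_mul' g h := by ext v <;> simp [Module.End.mul_apply]

/-- The subrepresentation on an invariant submodule. -/
def resSub {V : Type*} [AddCommGroup V] [Module ℂ V]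
    (π : Representation ℂ G V) (U : Submodule ℂ V)
    (hU : ∀ g, ∀ v ∈ U, π g v ∈ U) : Representation ℂ G U where
  toFun g := (π g).restrict (fun v hv => hU g v hv)
  map_one' := by ext v; simp [LinearMap.restrict_apply]
  map_mul' g h := by ext v; simp [LinearMap.restrict_apply, Module.End.mul_apply]

/-- The conjugate `π^g` of a representation of a normal subgroup `N`,
given by `x ↦ π (g⁻¹ x g)`. -/
def conjRep {N : Subgroup G} [N.Normal] {V : Type*} [AddCommGroup V] [Module ℂ V]
    (π : Representation ℂ N V) (g : G) : Representation ℂ N V :=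
  π.comp (MulAut.conjNormal g⁻¹ : N ≃* N).toMonoidHom

/-- The space of the representation of `G` induced from a representation of a
subgroup `N`: functions `f : G → V` with `f (n * x) = π n (f x)`. -/
def indSubmodule (N : Subgroup G) {V : Type*} [AddCommGroup V] [Module ℂ V]
    (π : Representation ℂ N V) : Submodule ℂ (G → V) where
  carrier := {f | ∀ (n : N) (x : G), f (n * x) = π n (f x)}
  add_mem' := by intro f₁ f₂ h₁ h₂ n x; simp [h₁ n x, h₂ n x]
  zero_mem' := by intro n x; simp
  smul_mem' := by intro c f hf n x; simp [hf n x]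

/-- The representation of `G` induced from a representation `π` of a subgroup `N`,
acting by right translation on `indSubmodule N π`. -/
def ind (N : Subgroup G) {V : Type*} [AddCommGroup V] [Module ℂ V]
    (π : Representation ℂ N V) : Representation ℂ G (indSubmodule N π) where
  toFun g :=
    { toFun := fun f => ⟨fun x => (f : G → V) (x * g),
        fun n x => by simpa [mul_assoc] using f.2 n (x * g)⟩
      map_add' := fun f₁ f₂ => by ext x; rfl
      map_smul' := fun c f => by ext x; rfl }
  map_one' := by ext f x; simp
  map_mul' g h := by ext f x; simp [Module.End.mul_apply, mul_assoc]




section Helpers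

/-- Schur: an endomorphism commuting with all of an irreducible rep is scalar. -/
lemma schur_scalar {G₁ : Type*} [Group G₁] {V : Type*} [AddCommGroup V] [Module ℂ V]
    [FiniteDimensional ℂ V] (π : Representation ℂ G₁ V)
    (hπ : IsIrreducibleRep π)
    (a : Module.End ℂ V) (ha : ∀ g : G₁, a * π g = π g * a) :
    ∃ μ : ℂ, a = μ • 1 := by
  obtain ⟨v₀, hv₀⟩ := hπ.1
  haveI : Nontrivial V := ⟨v₀, 0, hv₀⟩
  obtain ⟨μ, hμ⟩ := Module.End.exists_eigenvalue a
  refine ⟨μ, ?_⟩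
  have hinv : ∀ g, ∀ v ∈ a.eigenspace μ, π g v ∈ a.eigenspace μ := by
    intro g v hv
    rw [Module.End.mem_eigenspace_iff] at hv ⊢
    have : a (π g v) = π g (a v) := by
      have := congrArg (fun f => f v) (ha g)
      simpa [Module.End.mul_apply] using this
    rw [this, hv, map_smul]
  rcases hπ.2 _ hinv with h | h
  · exact absurd h hμ
  · ext v
    have hv : v ∈ a.eigenspace μ := h ▸ Submodule.mem_top
    rw [Module.End.mem_eigenspace_iff] at hv
    simpa using hv

lemma comm_K {G₁ : Type*} [Group G₁] (H : Subgroup G₁) {V : Type*} [AddCommGroup V] [Module ℂ V]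
    [FiniteDimensional ℂ V] (π : Representation ℂ G₁ V)
    (hcenter : ∀ z ∈ Subgroup.center G₁, ∃ μ : ℂ, π z = μ • 1)
    (c : Module.End ℂ V) (hc : ∀ h : H, c * π ↑h = π ↑h * c) :
    ∀ k ∈ (Subgroup.center G₁ ⊔ H), c * π k = π k * c := by
  intro k hk
  have hgen : Subgroup.center G₁ ⊔ H =
      Subgroup.closure ((Subgroup.center G₁ : Set G₁) ∪ (H : Set G₁)) := by
    rw [Subgroup.closure_union, Subgroup.closure_eq, Subgroup.closure_eq]
  rw [hgen] at hk
  induction hk using Subgroup.closure_induction with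
  | mem x hx =>
      rcases hx with hx | hx
      · obtain ⟨μ, hμ⟩ := hcenter x hx
        rw [hμ]; simp [smul_mul_assoc, mul_smul_comm]
      · exact hc ⟨x, hx⟩
  | one => simp
  | mul x y _ _ hx hy =>
      rw [map_mul, ← mul_assoc, hx, mul_assoc, hy, mul_assoc]
  | inv x _ hx =>
      have h1 : π x * π x⁻¹ = 1 := by rw [← map_mul, mul_inv_cancel, map_one]
      have h2 : π x⁻¹ * π x = 1 := by rw [← map_mul, inv_mul_cancel, map_one]
      calc c * π x⁻¹ = π x⁻¹ * (π x * c * π x⁻¹) := by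
            rw [← mul_assoc, ← mul_assoc, h2, one_mul]
        _ = π x⁻¹ * c := by rw [← hx, mul_assoc, h1, mul_one]


variable {R : Type*} [Ring R] [Algebra ℂ R]

lemma eig_mul {u c d : R} {μ ν : ℂ} (hc : u * c = μ • (c * u)) (hd : u * d = ν • (d * u)) :
    u * (c * d) = (μ * ν) • (c * d * u) := by
  calc u * (c * d) = (u * c) * d := by rw [mul_assoc]
    _ = μ • (c * (u * d)) := by rw [hc, smul_mul_assoc, mul_assoc]
    _ = μ • (c * (ν • (d * u))) := by rw [hd]
    _ = (μ * ν) • (c * d * u) := by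
        rw [mul_smul_comm, smul_smul, mul_assoc]

lemma eig_inv {u c d : R} {μ : ℂ} (hμ : μ ≠ 0) (hcd : c * d = 1) (hdc : d * c = 1)
    (hc : u * c = μ • (c * u)) : u * d = μ⁻¹ • (d * u) := by
  have h1 : d * (u * c) * d = d * (μ • (c * u)) * d := by rw [hc]
  have h2 : d * u = μ • (u * d) := by
    calc d * u = d * u * (c * d) := by rw [hcd, mul_one]
      _ = d * (u * c) * d := by simp only [mul_assoc]
      _ = d * (μ • (c * u)) * d := by rw [hc]
      _ = μ • (d * c * (u * d)) := by
          rw [mul_smul_comm, smul_mul_assoc]; congr 1; simp only [mul_assoc]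
      _ = μ • (u * d) := by rw [hdc, one_mul]
  rw [h2, smul_smul, inv_mul_cancel₀ hμ, one_smul]


end Helpers

section Helpers2

lemma exists_compl_ge {Kf : Type*} [Field Kf] {V : Type*} [AddCommGroup V] [Module Kf V]
    (p q : Submodule Kf V) (hpq : p ⊓ q = ⊥) : ∃ r, q ≤ r ∧ IsCompl p r := by
  obtain ⟨r', hr'⟩ := Submodule.exists_isCompl (p ⊔ q)
  refine ⟨q ⊔ r', le_sup_left, ?_, ?_⟩
  · rw [disjoint_iff]
    rw [eq_bot_iff]
    intro v hv
    obtain ⟨hvp, hvqr⟩ := Submodule.mem_inf.mp hv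
    obtain ⟨w, hw, x, hx, rfl⟩ := Submodule.mem_sup.mp hvqr
    have hxpq : x ∈ (p ⊔ q) := by
      have h1 : w + x - w ∈ (p ⊔ q) := by
        refine Submodule.sub_mem _ ?_ ?_
        · exact Submodule.mem_sup_left hvp
        · exact Submodule.mem_sup_right hw
      simpa using h1
    have hx0 : x = 0 := by
      have : x ∈ (p ⊔ q) ⊓ r' := Submodule.mem_inf.mpr ⟨hxpq, hx⟩
      rwa [disjoint_iff.mp hr'.disjoint, Submodule.mem_bot] at this
    have hw0 : w ∈ p ⊓ q := by
      rw [hx0, add_zero] at hvp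
      exact Submodule.mem_inf.mpr ⟨hvp, hw⟩
    rw [hpq, Submodule.mem_bot] at hw0
    rw [Submodule.mem_bot]
    rw [hx0, add_zero]
    exact hw0
  · rw [codisjoint_iff, ← sup_assoc, codisjoint_iff.mp hr'.codisjoint]

lemma commutant_comm {G₁ : Type*} [Group G₁] [Finite G₁] (H : Subgroup G₁)
    [hK : (Subgroup.center G₁ ⊔ H).Normal]
    (hcyc : IsCyclic (G₁ ⧸ (Subgroup.center G₁ ⊔ H)))
    {V : Type*} [AddCommGroup V] [Module ℂ V] [FiniteDimensional ℂ V]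
    (π : Representation ℂ G₁ V)
    (hπ : IsIrreducibleRep π)
    (a b : Module.End ℂ V)
    (ha : ∀ h : H, a * π ↑h = π ↑h * a) (hb : ∀ h : H, b * π ↑h = π ↑h * b) :
    a * b = b * a := by
  classical
  obtain ⟨v₀, hv₀⟩ := hπ.1
  haveI : Nontrivial V := ⟨v₀, 0, hv₀⟩
  have hone : (1 : Module.End ℂ V) ≠ 0 := one_ne_zero
  set K : Subgroup G₁ := Subgroup.center G₁ ⊔ H with hKdef
  set C : Set (Module.End ℂ V) := {c | ∀ h : H, c * π ↑h = π ↑h * c} with hCdef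
  have haC : a ∈ C := ha
  have hbC : b ∈ C := hb
  -- center acts by scalars
  have hcenter : ∀ z ∈ Subgroup.center G₁, ∃ μ : ℂ, π z = μ • 1 := by
    intro z hz
    refine schur_scalar π hπ (π z) (fun g => ?_)
    rw [← map_mul, ← map_mul, (Subgroup.mem_center_iff.mp hz g)]
  have hCK : ∀ c ∈ C, ∀ k ∈ K, c * π k = π k * c :=
    fun c hc => comm_K H π hcenter c hc
  -- the generator g₀
  obtain ⟨x, hx⟩ := hcyc.exists_generator
  obtain ⟨g₀, rfl⟩ := QuotientGroup.mk_surjective x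
  set m₀ := orderOf g₀ with hm₀def
  have hm₀ : 0 < m₀ := orderOf_pos g₀
  -- ℤ-powers of g₀ are ℕ-powers
  have hnatpow : ∀ n : ℤ, ∃ s : ℕ, g₀ ^ n = g₀ ^ s := by
    intro n
    refine ⟨(n % (m₀ : ℤ)).toNat, ?_⟩
    have h0 : (0:ℤ) < (m₀ : ℤ) := by exact_mod_cast hm₀
    have hnn : 0 ≤ n % (m₀ : ℤ) := Int.emod_nonneg n h0.ne'
    have : g₀ ^ ((n % (m₀:ℤ)).toNat : ℤ) = g₀ ^ n := by
      rw [Int.toNat_of_nonneg hnn]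
      conv_rhs => rw [← Int.emod_add_mul_ediv n (m₀:ℤ)]
      rw [zpow_add, zpow_mul]
      norm_cast
      rw [pow_orderOf_eq_one, one_zpow, mul_one]
    rw [← zpow_natCast]
    exact this.symm
  have hdec : ∀ g : G₁, ∃ (s : ℕ) (k : G₁), k ∈ K ∧ g = g₀ ^ s * k := by
    intro g
    obtain ⟨n, hn⟩ := hx (QuotientGroup.mk g)
    obtain ⟨s, hs⟩ := hnatpow n
    have : (QuotientGroup.mk (g₀ ^ s) : G₁ ⧸ K) = QuotientGroup.mk g := by
      rw [← hs, QuotientGroup.mk_zpow]; exact hn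
    have hk : (g₀ ^ s)⁻¹ * g ∈ K := QuotientGroup.eq.mp this
    exact ⟨s, _, hk, by group⟩
  set u : Module.End ℂ V := π g₀ with hudef
  set u' : Module.End ℂ V := π g₀⁻¹ with hu'def
  have huu' : u * u' = 1 := by rw [hudef, hu'def, ← map_mul, mul_inv_cancel, map_one]
  have hu'u : u' * u = 1 := by rw [hudef, hu'def, ← map_mul, inv_mul_cancel, map_one]
  have hum : u ^ m₀ = 1 := by rw [hudef, ← map_pow, pow_orderOf_eq_one, map_one]
  have hu'm : u' ^ m₀ = 1 := by
    rw [hu'def, ← map_pow, inv_pow, pow_orderOf_eq_one, inv_one, map_one]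
  set ζ : ℂ := Complex.exp (2 * Real.pi * Complex.I / m₀) with hζdef
  have hζ : IsPrimitiveRoot ζ m₀ := Complex.isPrimitiveRoot_exp m₀ hm₀.ne'
  have hζm : ζ ^ m₀ = 1 := hζ.pow_eq_one
  have hζne : ζ ≠ 0 := by
    intro h; rw [h, zero_pow hm₀.ne'] at hζm; exact zero_ne_one hζm
  -- Schur for elements commuting with u and H
  have hschur : ∀ c ∈ C, Commute u c → ∃ μ : ℂ, c = μ • 1 := by
    intro c hc hcu
    refine schur_scalar π hπ c (fun g => ?_)
    obtain ⟨s, k, hk, rfl⟩ := hdec g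
    have h1 : Commute c (π (g₀ ^ s)) := by
      rw [map_pow]; exact (hcu.symm.pow_right s)
    have h2 : Commute c (π k) := hCK c hc k hk
    have := (h1.mul_right h2)
    rwa [← map_mul] at this
  -- C is closed under multiplication
  have hCmul : ∀ c ∈ C, ∀ d ∈ C, c * d ∈ C := by
    intro c hc d hd h
    calc c * d * π ↑h = c * (π ↑h * d) := by rw [mul_assoc, hd h]
      _ = π ↑h * (c * d) := by rw [← mul_assoc, hc h, mul_assoc]
  -- nonzero eigenvectors are invertible
  have hbij : ∀ c ∈ C, ∀ μ : ℂ, μ ≠ 0 → u * c = μ • (c * u) → c ≠ 0 →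
      Function.Bijective c := by
    intro c hc μ hμ heig hc0
    have hcu : c * u = μ⁻¹ • (u * c) := by
      rw [heig, smul_smul, inv_mul_cancel₀ hμ, one_smul]
    have hker_u : ∀ v ∈ LinearMap.ker c, u v ∈ LinearMap.ker c := by
      intro v hv
      rw [LinearMap.mem_ker] at hv ⊢
      have h1 := congrArg (fun f => f v) hcu
      simp only [Module.End.mul_apply, LinearMap.smul_apply] at h1
      rw [h1, hv, map_zero, smul_zero]
    have hker_us : ∀ s : ℕ, ∀ v ∈ LinearMap.ker c, (u ^ s) v ∈ LinearMap.ker c := by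
      intro s
      induction s with
      | zero => intro v hv; simpa using hv
      | succ n ih =>
          intro v hv
          have : (u ^ (n+1)) v = u ((u ^ n) v) := by
            rw [pow_succ']; rfl
          rw [this]
          exact hker_u _ (ih v hv)
    have hker_inv : ∀ g, ∀ v ∈ LinearMap.ker c, π g v ∈ LinearMap.ker c := by
      intro g v hv
      obtain ⟨s, k, hk, rfl⟩ := hdec g
      have h2 : π k v ∈ LinearMap.ker c := by
        rw [LinearMap.mem_ker]
        have := congrArg (fun f => f v) (hCK c hc k hk)
        simp only [Module.End.mul_apply] at this
        rw [this, LinearMap.mem_ker.mp hv, map_zero]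
      have h3 : π (g₀ ^ s * k) v = (u ^ s) (π k v) := by
        rw [map_mul, map_pow]; rfl
      rw [h3]
      exact hker_us s _ h2
    rcases hπ.2 _ hker_inv with hker | hker
    · have hinj := LinearMap.ker_eq_bot.mp hker
      exact ⟨hinj, LinearMap.injective_iff_surjective.mp hinj⟩
    · exact absurd (LinearMap.ker_eq_top.mp hker) hc0
  -- two-sided inverses
  have hinv : ∀ c : Module.End ℂ V, Function.Bijective c →
      ∃ d : Module.End ℂ V, c * d = 1 ∧ d * c = 1 := by
    intro c hbijc
    refine ⟨(LinearEquiv.ofBijective c hbijc).symm.toLinearMap, ?_, ?_⟩ <;> ext v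
    · simpa using (LinearEquiv.ofBijective c hbijc).apply_symm_apply v
    · simpa using (LinearEquiv.ofBijective c hbijc).symm_apply_apply v
  have hCinv : ∀ c ∈ C, ∀ d : Module.End ℂ V, c * d = 1 → d * c = 1 → d ∈ C := by
    intro c hc d h1 h2 h
    calc d * π ↑h = d * π ↑h * (c * d) := by rw [h1, mul_one]
      _ = d * (π ↑h * c) * d := by simp only [mul_assoc]
      _ = d * (c * π ↑h) * d := by rw [← hc h]
      _ = (d * c) * (π ↑h * d) := by simp only [mul_assoc]
      _ = π ↑h * d := by rw [h2, one_mul]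
  -- same-eigenvalue elements are proportional
  have hscal : ∀ μ : ℂ, μ ≠ 0 → ∀ c ∈ C, ∀ c' ∈ C, u * c = μ • (c * u) →
      u * c' = μ • (c' * u) → c ≠ 0 → ∃ ν : ℂ, c' = ν • c := by
    intro μ hμ c hc c' hc' hec hec' hc0
    obtain ⟨d, hcd, hdc⟩ := hinv c (hbij c hc μ hμ hec hc0)
    have hdC : d ∈ C := hCinv c hc d hcd hdc
    have hed : u * d = μ⁻¹ • (d * u) := eig_inv hμ hcd hdc hec
    have hcomm : Commute u (c' * d) := by
      have h4 := eig_mul hec' hed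
      rwa [mul_inv_cancel₀ hμ, one_smul, ← mul_assoc] at h4
    obtain ⟨ν, hν⟩ := hschur (c' * d) (hCmul c' hc' d hdC) hcomm
    refine ⟨ν, ?_⟩
    calc c' = c' * (d * c) := by rw [hdc, mul_one]
      _ = (c' * d) * c := by rw [mul_assoc]
      _ = (ν • 1) * c := by rw [hν]
      _ = ν • c := by rw [smul_mul_assoc, one_mul]
  -- conjugates stay in C
  have hTC : ∀ c ∈ C, ∀ i : ℕ, u ^ i * c * u' ^ i ∈ C := by
    intro c hc i h
    have hui : u ^ i = π (g₀ ^ i) := by rw [map_pow]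
    have hu'i : u' ^ i = π ((g₀ ^ i)⁻¹) := by rw [← inv_pow, map_pow]
    set gi := g₀ ^ i with hgi
    have hkK : gi⁻¹ * ↑h * gi ∈ K := by
      have hhK : (↑h : G₁) ∈ K := (le_sup_right : H ≤ K) h.2
      have := hK.conj_mem _ hhK gi⁻¹
      simpa using this
    set k := gi⁻¹ * ↑h * gi with hkdef
    have e1 : π ↑h * u ^ i = u ^ i * π k := by
      rw [hui, ← map_mul, ← map_mul]
      congr 1
      rw [hkdef]
      group
    have e2 : π k * u' ^ i = u' ^ i * π ↑h := by
      rw [hu'i, ← map_mul, ← map_mul]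
      congr 1
      rw [hkdef]
      group
    calc u ^ i * c * u' ^ i * π ↑h = u ^ i * c * (u' ^ i * π ↑h) := by
          simp only [mul_assoc]
      _ = u ^ i * c * (π k * u' ^ i) := by rw [e2]
      _ = u ^ i * (c * π k) * u' ^ i := by simp only [mul_assoc]
      _ = u ^ i * (π k * c) * u' ^ i := by rw [hCK c hc k hkK]
      _ = (u ^ i * π k) * (c * u' ^ i) := by simp only [mul_assoc]
      _ = (π ↑h * u ^ i) * (c * u' ^ i) := by rw [e1]
      _ = π ↑h * (u ^ i * c * u' ^ i) := by simp only [mul_assoc]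
  have hCsmul : ∀ (μ : ℂ), ∀ c ∈ C, μ • c ∈ C := by
    intro μ c hc h
    rw [smul_mul_assoc, hc h, mul_smul_comm]
  have hCsum : ∀ (n : ℕ) (F : ℕ → Module.End ℂ V), (∀ i ∈ Finset.range n, F i ∈ C) →
      (∑ i ∈ Finset.range n, F i) ∈ C := by
    intro n F hF h
    rw [Finset.sum_mul, Finset.mul_sum]
    exact Finset.sum_congr rfl fun i hi => hF i hi h
  -- the eigencomponents
  set comp : Module.End ℂ V → ℕ → Module.End ℂ V := fun c j =>
    (m₀ : ℂ)⁻¹ • ∑ i ∈ Finset.range m₀, ((ζ ^ i)⁻¹) ^ j • (u ^ i * c * u' ^ i) with hcompdef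
  have hcompC : ∀ c ∈ C, ∀ j : ℕ, comp c j ∈ C := by
    intro c hc j
    exact hCsmul _ _ (hCsum _ _ (fun i _ => hCsmul _ _ (hTC c hc i)))
  have hm₀C : (m₀ : ℂ) ≠ 0 := Nat.cast_ne_zero.mpr hm₀.ne'
  have hTm : ∀ c : Module.End ℂ V, u ^ m₀ * c * u' ^ m₀ = c := by
    intro c; rw [hum, hu'm, one_mul, mul_one]
  have hshift : ∀ F : ℕ → Module.End ℂ V, F m₀ = F 0 →
      ∑ i ∈ Finset.range m₀, F (i + 1) = ∑ i ∈ Finset.range m₀, F i := by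
    intro F hF
    have h1 := Finset.sum_range_succ' F m₀
    have h2 := Finset.sum_range_succ F m₀
    rw [h2, hF] at h1
    exact add_right_cancel h1.symm
  have heig_comp : ∀ (c : Module.End ℂ V) (j : ℕ),
      u * comp c j = (ζ ^ j) • (comp c j * u) := by
    intro c j
    have hstep : ∀ i : ℕ, u' ^ (i + 1) * u = u' ^ i := by
      intro i; rw [pow_succ, mul_assoc, hu'u, mul_one]
    have hTstep : ∀ i : ℕ,
        u * (u ^ i * c * u' ^ i) = (u ^ (i+1) * c * u' ^ (i+1)) * u := by
      intro i
      have h1 : (u ^ (i+1) * c * u' ^ (i+1)) * u = u ^ (i+1) * (c * (u' ^ (i+1) * u)) := by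
        simp only [mul_assoc]
      rw [h1, hstep i, pow_succ']
      simp only [mul_assoc]
    have hcoef : ∀ i : ℕ, ((ζ ^ i)⁻¹) ^ j = ζ ^ j * ((ζ ^ (i+1))⁻¹) ^ j := by
      intro i
      have hzi : (ζ : ℂ) ^ i ≠ 0 := pow_ne_zero _ hζne
      have hzi1 : (ζ : ℂ) ^ (i+1) ≠ 0 := pow_ne_zero _ hζne
      field_simp
      rw [one_div, one_div, pow_succ, mul_inv, mul_pow, mul_left_comm, ← mul_pow,
        mul_inv_cancel₀ hζne, one_pow, mul_one]
    calc u * comp c j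
        = (m₀ : ℂ)⁻¹ • ∑ i ∈ Finset.range m₀,
            ((ζ ^ i)⁻¹) ^ j • (u * (u ^ i * c * u' ^ i)) := by
          rw [hcompdef]
          simp only [mul_smul_comm, Finset.mul_sum]
      _ = (m₀ : ℂ)⁻¹ • ∑ i ∈ Finset.range m₀,
            (ζ ^ j * ((ζ ^ (i+1))⁻¹) ^ j) • ((u ^ (i+1) * c * u' ^ (i+1)) * u) := by
          congr 1
          refine Finset.sum_congr rfl fun i _ => ?_
          rw [hTstep, ← hcoef]
      _ = (ζ ^ j) • ((m₀ : ℂ)⁻¹ • ∑ i ∈ Finset.range m₀,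
            (((ζ ^ (i+1))⁻¹) ^ j) • ((u ^ (i+1) * c * u' ^ (i+1)) * u)) := by
          simp only [mul_smul]
          rw [← Finset.smul_sum, smul_comm]
      _ = (ζ ^ j) • ((m₀ : ℂ)⁻¹ • ∑ i ∈ Finset.range m₀,
            (((ζ ^ i)⁻¹) ^ j) • ((u ^ i * c * u' ^ i) * u)) := by
          congr 2
          refine hshift (fun i => (((ζ ^ i)⁻¹) ^ j) • ((u ^ i * c * u' ^ i) * u)) ?_
          simp only [hum, hu'm, hζm, pow_zero, inv_one, one_pow, one_mul, mul_one]
      _ = (ζ ^ j) • (comp c j * u) := by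
          rw [hcompdef]
          simp only [smul_mul_assoc, Finset.sum_mul]
  have hsum_comp : ∀ c : Module.End ℂ V, ∑ j ∈ Finset.range m₀, comp c j = c := by
    intro c
    have hswap : ∑ j ∈ Finset.range m₀, comp c j
        = (m₀ : ℂ)⁻¹ • ∑ i ∈ Finset.range m₀,
            (∑ j ∈ Finset.range m₀, ((ζ ^ i)⁻¹) ^ j) • (u ^ i * c * u' ^ i) := by
      rw [hcompdef, ← Finset.smul_sum]
      congr 1
      rw [Finset.sum_comm]
      refine Finset.sum_congr rfl fun i _ => ?_
      rw [Finset.sum_smul]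
    rw [hswap]
    have hgeom : ∀ i ∈ Finset.range m₀, i ≠ 0 →
        (∑ j ∈ Finset.range m₀, ((ζ ^ i)⁻¹) ^ j) = 0 := by
      intro i hi hi0
      set ξ : ℂ := (ζ ^ i)⁻¹ with hξ
      have hξm : ξ ^ m₀ = 1 := by
        rw [hξ, inv_pow, ← pow_mul, mul_comm i m₀, pow_mul, hζm, one_pow, inv_one]
      have hξ1 : ξ ≠ 1 := by
        rw [hξ, ne_eq, inv_eq_one]
        exact hζ.pow_ne_one_of_pos_of_lt hi0 (Finset.mem_range.mp hi)
      have := geom_sum_mul ξ m₀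
      rw [hξm, sub_self] at this
      rcases mul_eq_zero.mp this with h | h
      · exact h
      · exact absurd (sub_eq_zero.mp h) hξ1
    have hsingle : ∑ i ∈ Finset.range m₀,
        (∑ j ∈ Finset.range m₀, ((ζ ^ i)⁻¹) ^ j) • (u ^ i * c * u' ^ i)
        = (m₀ : ℂ) • c := by
      rw [Finset.sum_eq_single 0]
      · simp only [pow_zero, inv_one, one_pow, Finset.sum_const, Finset.card_range,
          nsmul_eq_mul, mul_one, one_mul, mul_one]
      · intro i hi hi0
        rw [hgeom i hi hi0, zero_smul]
      · intro h0
        exact absurd (Finset.mem_range.mpr hm₀) h0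
    rw [hsingle, smul_smul, inv_mul_cancel₀ hm₀C, one_smul]
  have hne_of_bij : ∀ e : Module.End ℂ V, Function.Bijective e → e ≠ 0 := by
    intro e he h0
    exact hv₀ (he.1 (by rw [h0]; rfl))
  -- the subgroup of occurring eigen-exponents
  set J : AddSubgroup ℤ :=
    { carrier := {n : ℤ | ∃ c ∈ C, c ≠ 0 ∧ u * c = (ζ ^ n) • (c * u)},
      zero_mem' := ⟨1, fun h => by rw [one_mul, mul_one], hone,
        by rw [zpow_zero, one_smul, one_mul, mul_one]⟩,
      add_mem' := by
        rintro n m ⟨c, hc, hc0, hceig⟩ ⟨d, hd, hd0, hdeig⟩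
        refine ⟨c * d, hCmul c hc d hd, ?_, ?_⟩
        · refine hne_of_bij _ ?_
          have h1 := hbij c hc _ (zpow_ne_zero n hζne) hceig hc0
          have h2 := hbij d hd _ (zpow_ne_zero m hζne) hdeig hd0
          rw [show ⇑(c * d) = ⇑c ∘ ⇑d from rfl]
          exact h1.comp h2
        · have := eig_mul hceig hdeig
          rwa [← zpow_add₀ hζne, ← mul_assoc] at this
      neg_mem' := by
        rintro n ⟨c, hc, hc0, hceig⟩
        obtain ⟨d, hcd, hdc⟩ := hinv c (hbij c hc _ (zpow_ne_zero n hζne) hceig hc0)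
        refine ⟨d, hCinv c hc d hcd hdc, ?_, ?_⟩
        · intro h0; rw [h0, mul_zero] at hcd; exact hone hcd.symm
        · have := eig_inv (zpow_ne_zero n hζne) hcd hdc hceig
          rwa [← zpow_neg] at this } with hJdef
  obtain ⟨n₀, hJgen⟩ := Int.subgroup_cyclic J
  have hn₀J : n₀ ∈ J := by
    rw [hJgen]
    exact AddSubgroup.subset_closure rfl
  obtain ⟨w, hwC, hw0, hweig⟩ := hn₀J
  obtain ⟨winv, hw1, hw2⟩ := hinv w (hbij w hwC _ (zpow_ne_zero n₀ hζne) hweig hw0)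
  set Wu : (Module.End ℂ V)ˣ := ⟨w, winv, hw1, hw2⟩ with hWudef
  have hWinvC : winv ∈ C := hCinv w hwC winv hw1 hw2
  have hWinveig : u * winv = (ζ ^ (-n₀)) • (winv * u) := by
    have := eig_inv (zpow_ne_zero n₀ hζne) hw1 hw2 hweig
    rwa [← zpow_neg] at this
  have hWpow : ∀ t : ℤ, ((Wu ^ t : (Module.End ℂ V)ˣ) : Module.End ℂ V) ∈ C ∧
      u * ((Wu ^ t : (Module.End ℂ V)ˣ) : Module.End ℂ V)
        = (ζ ^ (t * n₀)) • (((Wu ^ t : (Module.End ℂ V)ˣ) : Module.End ℂ V) * u) := by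
    intro t
    induction t using Int.induction_on with
    | zero =>
        refine ⟨fun h => by rw [zpow_zero, Units.val_one, one_mul, mul_one], ?_⟩
        rw [zpow_zero, Units.val_one, zero_mul, zpow_zero, one_smul, one_mul, mul_one]
    | succ i ih =>
        have hsplit : ((Wu ^ ((i : ℤ) + 1) : (Module.End ℂ V)ˣ) : Module.End ℂ V)
            = ((Wu ^ (i : ℤ) : (Module.End ℂ V)ˣ) : Module.End ℂ V) * w := by
          rw [zpow_add_one, Units.val_mul]
        constructor
        · rw [hsplit]; exact hCmul _ ih.1 w hwC
        · rw [hsplit]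
          have := eig_mul ih.2 hweig
          rwa [← zpow_add₀ hζne, ← mul_assoc, show (i:ℤ) * n₀ + n₀ = ((i:ℤ)+1) * n₀ by ring]
            at this
    | pred i ih =>
        have hsplit : ((Wu ^ (-(i : ℤ) - 1) : (Module.End ℂ V)ˣ) : Module.End ℂ V)
            = ((Wu ^ (-(i : ℤ)) : (Module.End ℂ V)ˣ) : Module.End ℂ V) * winv := by
          rw [zpow_sub_one, Units.val_mul]; rfl
        constructor
        · rw [hsplit]; exact hCmul _ ih.1 winv hWinvC
        · rw [hsplit]
          have := eig_mul ih.2 hWinveig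
          rwa [← zpow_add₀ hζne, ← mul_assoc,
            show -(i:ℤ) * n₀ + -n₀ = (-(i:ℤ) - 1) * n₀ by ring] at this
  have hWne : ∀ t : ℤ, ((Wu ^ t : (Module.End ℂ V)ˣ) : Module.End ℂ V) ≠ 0 := by
    intro t h0
    have h1 := Units.mul_inv (Wu ^ t)
    rw [h0, zero_mul] at h1
    exact hone h1.symm
  -- each eigencomponent is a scalar multiple of a power of Wu
  have hpow_rep : ∀ c ∈ C, ∀ j : ℕ, ∃ (ν : ℂ) (t : ℤ),
      comp c j = ν • ((Wu ^ t : (Module.End ℂ V)ˣ) : Module.End ℂ V) := by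
    intro c hc j
    by_cases h0 : comp c j = 0
    · exact ⟨0, 0, by rw [h0, zero_smul]⟩
    · have hjJ : (j : ℤ) ∈ J := by
        refine ⟨comp c j, hcompC c hc j, h0, ?_⟩
        rw [zpow_natCast]; exact heig_comp c j
      rw [hJgen, AddSubgroup.mem_closure_singleton] at hjJ
      obtain ⟨t, ht⟩ := hjJ
      have hteig : u * ((Wu ^ t : (Module.End ℂ V)ˣ) : Module.End ℂ V)
          = (ζ ^ j) • (((Wu ^ t : (Module.End ℂ V)ˣ) : Module.End ℂ V) * u) := by
        have h2 := (hWpow t).2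
        rw [show t * n₀ = (j : ℤ) by rw [← ht]; simp [zsmul_eq_mul], zpow_natCast] at h2
        exact h2
      obtain ⟨ν, hν⟩ := hscal (ζ ^ j) (pow_ne_zero _ hζne) _ (hWpow t).1 (comp c j)
        (hcompC c hc j) hteig (heig_comp c j) (hWne t)
      exact ⟨ν, t, hν⟩
  have hcommjk : ∀ j k : ℕ, comp a j * comp b k = comp b k * comp a j := by
    intro j k
    obtain ⟨ν, t, hν⟩ := hpow_rep a haC j
    obtain ⟨ν', t', hν'⟩ := hpow_rep b hbC k
    have hxy : ((Wu ^ t : (Module.End ℂ V)ˣ) : Module.End ℂ V)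
        * ((Wu ^ t' : (Module.End ℂ V)ˣ) : Module.End ℂ V)
        = ((Wu ^ t' : (Module.End ℂ V)ˣ) : Module.End ℂ V)
        * ((Wu ^ t : (Module.End ℂ V)ˣ) : Module.End ℂ V) := by
      rw [← Units.val_mul, ← Units.val_mul, ← zpow_add, ← zpow_add, add_comm]
    rw [hν, hν', smul_mul_assoc, smul_mul_assoc, mul_smul_comm, mul_smul_comm, hxy,
      smul_comm]
  have e1 := hsum_comp a
  have e2 := hsum_comp b
  rw [← e1, ← e2, Finset.sum_mul_sum, Finset.sum_mul_sum, Finset.sum_comm]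
  exact Finset.sum_congr rfl fun j _ => Finset.sum_congr rfl fun k _ => (hcommjk k j)


end Helpers2

/-- Let `G` be a finite group, `H` a subgroup, and `K = Z(G)⬝H` the
subgroup generated by the center of `G` together with `H`.  If `K` is normal in `G` and
`G/K` is cyclic, then every irreducible complex representation of `G` restricts to `H`
without multiplicity. -/
theorem multiplicity_free_of_center_mul_cyclic_quotient
    {G : Type*} [Group G] [Finite G] (H : Subgroup G)
    [hK : (Subgroup.center G ⊔ H).Normal]
    (hcyc : IsCyclic (G ⧸ (Subgroup.center G ⊔ H)))
    {V W : Type*}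
    [AddCommGroup V] [Module ℂ V] [FiniteDimensional ℂ V]
    [AddCommGroup W] [Module ℂ W] [FiniteDimensional ℂ W]
    (π : Representation ℂ G V) (hπ : IsIrreducibleRep π)
    (ρ : Representation ℂ H W) (hρ : IsIrreducibleRep ρ) :
    Module.finrank ℂ (equivariantHoms ρ (π.comp H.subtype)) ≤ 1 := by
  classical
  haveI : Fintype H := Fintype.ofFinite H
  set σ : Representation ℂ H V := π.comp H.subtype with hσdef
  set M : Submodule ℂ (W →ₗ[ℂ] V) := equivariantHoms ρ σ with hMdef
  -- membership criterion
  have hmem : ∀ f : W →ₗ[ℂ] V, f ∈ M ↔ ∀ (h : H) (w : W), f (ρ h w) = σ h (f w) :=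
    fun f => Iff.rfl
  -- nonzero elements are injective
  have hinj : ∀ f : W →ₗ[ℂ] V, f ∈ M → f ≠ 0 → Function.Injective f := by
    intro f hf hf0
    have hkerinv : ∀ (h : H), ∀ w ∈ LinearMap.ker f, ρ h w ∈ LinearMap.ker f := by
      intro h w hw
      rw [LinearMap.mem_ker] at hw ⊢
      rw [hf h w, hw, map_zero]
    rcases hρ.2 (LinearMap.ker f) hkerinv with h | h
    · exact LinearMap.ker_eq_bot.mp h
    · exact absurd (LinearMap.ker_eq_top.mp h) hf0
  -- ranges are invariant
  have hrng : ∀ f : W →ₗ[ℂ] V, f ∈ M → ∀ (h : H), ∀ v ∈ LinearMap.range f,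
      σ h v ∈ LinearMap.range f := by
    rintro f hf h v ⟨w, rfl⟩
    exact ⟨ρ h w, (hf h w)⟩
  -- averaging operator
  have hcard : ((Fintype.card H : ℂ)) ≠ 0 :=
    Nat.cast_ne_zero.mpr (Fintype.card_ne_zero)
  set Av : Module.End ℂ V → Module.End ℂ V := fun q =>
    (Fintype.card H : ℂ)⁻¹ • ∑ h : H, σ h * q * σ h⁻¹ with hAvdef
  have hAvC : ∀ q : Module.End ℂ V, ∀ h₀ : H, Av q * σ h₀ = σ h₀ * Av q := by
    intro q h₀
    rw [hAvdef]
    simp only [smul_mul_assoc, mul_smul_comm]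
    congr 1
    rw [Finset.sum_mul, Finset.mul_sum]
    refine Fintype.sum_equiv (Equiv.mulLeft h₀⁻¹) _ _ (fun h => ?_)
    simp only [Equiv.coe_mulLeft]
    rw [mul_inv_rev, inv_inv, map_mul σ h₀⁻¹ h, map_mul σ h⁻¹ h₀]
    have hassoc : σ h₀ * (σ h₀⁻¹ * σ h * q * (σ h⁻¹ * σ h₀))
        = (σ h₀ * σ h₀⁻¹) * (σ h * q * σ h⁻¹ * σ h₀) := by
      simp only [mul_assoc]
    rw [hassoc, ← map_mul, mul_inv_cancel, map_one, one_mul]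
  have hAv_int : ∀ (f g : W →ₗ[ℂ] V), f ∈ M → g ∈ M → ∀ q : Module.End ℂ V,
      (∀ w, q (f w) = g w) → ∀ w, Av q (f w) = g w := by
    intro f g hf hg q hq w
    rw [hAvdef]
    simp only [LinearMap.smul_apply, LinearMap.sum_apply, Module.End.mul_apply]
    have hterm : ∀ h : H, σ h (q (σ h⁻¹ (f w))) = g w := by
      intro h
      have h1 : σ h⁻¹ (f w) = f (ρ h⁻¹ w) := (hf h⁻¹ w).symm
      rw [h1, hq, ← hg h (ρ h⁻¹ w), ← Module.End.mul_apply, ← map_mul, mul_inv_cancel,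
        map_one, Module.End.one_apply]
    rw [Finset.sum_congr rfl (fun h _ => hterm h), Finset.sum_const, Finset.card_univ]
    rw [← Nat.cast_smul_eq_nsmul ℂ, smul_smul, inv_mul_cancel₀ hcard, one_smul]
  -- spanning argument
  rcases eq_or_ne M ⊥ with hMbot | hMne
  · rw [hMbot]
    simp [finrank_bot]
  · obtain ⟨f₁, hf₁M, hf₁0⟩ := Submodule.exists_mem_ne_zero_of_ne_bot hMne
    apply finrank_le_one (⟨f₁, hf₁M⟩ : M)
    rintro ⟨f₂, hf₂M⟩
    suffices h : ∃ c : ℂ, c • f₁ = f₂ by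
      obtain ⟨c, hc⟩ := h
      exact ⟨c, Subtype.ext hc⟩
    by_cases hf₂0 : f₂ = 0
    · exact ⟨0, by rw [zero_smul, hf₂0]⟩
    have inj₁ : Function.Injective f₁ := hinj f₁ hf₁M hf₁0
    have inj₂ : Function.Injective f₂ := hinj f₂ hf₂M hf₂0
    set U₁ := LinearMap.range f₁ with hU₁def
    set U₂ := LinearMap.range f₂ with hU₂def
    set e₁ : W ≃ₗ[ℂ] U₁ := LinearEquiv.ofInjective f₁ inj₁ with he₁def
    have hAinv : ∀ (h : H), ∀ w ∈ Submodule.comap f₁ U₂, ρ h w ∈ Submodule.comap f₁ U₂ := by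
      intro h w hw
      rw [Submodule.mem_comap] at hw ⊢
      rw [hf₁M h w]
      exact hrng f₂ hf₂M h _ hw
    have hBinv : ∀ (h : H), ∀ w ∈ Submodule.comap f₂ U₁, ρ h w ∈ Submodule.comap f₂ U₁ := by
      intro h w hw
      rw [Submodule.mem_comap] at hw ⊢
      rw [hf₂M h w]
      exact hrng f₁ hf₁M h _ hw
    rcases hρ.2 _ hAinv with hA | hA
    · -- disjoint images: contradiction via commutant commutativity
      exfalso
      have hdisj : U₁ ⊓ U₂ = ⊥ := by
        rw [eq_bot_iff]
        rintro v hv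
        obtain ⟨hv1, hv2⟩ := Submodule.mem_inf.mp hv
        obtain ⟨w, rfl⟩ := hv1
        have hwA : w ∈ Submodule.comap f₁ U₂ := Submodule.mem_comap.mpr hv2
        rw [hA, Submodule.mem_bot] at hwA
        rw [hwA, map_zero]
        exact Submodule.zero_mem ⊥
      obtain ⟨Y, hY2, hYc⟩ := exists_compl_ge U₁ U₂ hdisj
      set prj := Submodule.projectionOnto U₁ Y hYc with hprjdef
      set p : Module.End ℂ V := U₁.subtype ∘ₗ prj with hpdef
      set p' : Module.End ℂ V := (f₂ ∘ₗ e₁.symm.toLinearMap) ∘ₗ prj with hp'def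
      have hprj₁ : ∀ w : W, prj (f₁ w) = e₁ w := by
        intro w
        have h1 : f₁ w = ↑(e₁ w) := (LinearEquiv.ofInjective_apply f₁ w).symm
        rw [h1, Submodule.projectionOnto_apply_left hYc (e₁ w)]
      have hp1 : ∀ w, p (f₁ w) = f₁ w := by
        intro w
        rw [hpdef, LinearMap.comp_apply, hprj₁ w, Submodule.coe_subtype,
          LinearEquiv.ofInjective_apply]
      have hp2 : ∀ w, p (f₂ w) = 0 := by
        intro w
        rw [hpdef, LinearMap.comp_apply,
          Submodule.projectionOnto_apply_of_mem_right hYc (hY2 (LinearMap.mem_range_self f₂ w)),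
          map_zero]
      have hp'1 : ∀ w, p' (f₁ w) = f₂ w := by
        intro w
        rw [hp'def, LinearMap.comp_apply, hprj₁ w]
        simp only [LinearMap.comp_apply, LinearEquiv.coe_toLinearMap,
          LinearEquiv.symm_apply_apply]
      set c : Module.End ℂ V := Av p with hcdef
      set c' : Module.End ℂ V := Av p' with hc'def
      have hcomm : c * c' = c' * c :=
        commutant_comm H hcyc π hπ c c' (fun h => hAvC p h) (fun h => hAvC p' h)
      have hc'f₁ : ∀ w, c' (f₁ w) = f₂ w := hAv_int f₁ f₂ hf₁M hf₂M p' hp'1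
      have hcf₁ : ∀ w, c (f₁ w) = f₁ w := hAv_int f₁ f₁ hf₁M hf₁M p hp1
      have hcf₂ : ∀ w, c (f₂ w) = 0 :=
        hAv_int f₂ 0 hf₂M (Submodule.zero_mem M) p (fun w => by rw [hp2 w]; rfl)
      have hzero : ∀ w, f₂ w = 0 := by
        intro w
        have h1 : (c' * c) (f₁ w) = f₂ w := by
          rw [Module.End.mul_apply, hcf₁ w, hc'f₁ w]
        have h2 : (c * c') (f₁ w) = 0 := by
          rw [Module.End.mul_apply, hc'f₁ w, hcf₂ w]
        rw [← h1, ← hcomm, h2]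
      exact hf₂0 (by ext w; rw [hzero w]; rfl)
    · rcases hρ.2 _ hBinv with hB | hB
      · -- f₁ = 0 : contradiction
        exfalso
        apply hf₁0
        ext w
        have h1 : f₁ w ∈ U₂ := by
          have : w ∈ Submodule.comap f₁ U₂ := hA ▸ Submodule.mem_top
          exact Submodule.mem_comap.mp this
        obtain ⟨x, hx⟩ := h1
        have hxB : x ∈ Submodule.comap f₂ U₁ :=
          Submodule.mem_comap.mpr (hx ▸ LinearMap.mem_range_self f₁ w)
        rw [hB, Submodule.mem_bot] at hxB
        rw [hxB, map_zero] at hx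
        rw [← hx]
        rfl
      · -- U₁ = U₂ : scalar relation
        have hU : U₁ = U₂ := by
          apply le_antisymm
          · rintro v ⟨w, rfl⟩
            exact Submodule.mem_comap.mp (hA ▸ Submodule.mem_top)
          · rintro v ⟨w, rfl⟩
            exact Submodule.mem_comap.mp (hB ▸ Submodule.mem_top)
        have hcod : ∀ w, f₂ w ∈ U₁ := by
          intro w; rw [hU]; exact LinearMap.mem_range_self f₂ w
        set aE : Module.End ℂ W :=
          e₁.symm.toLinearMap ∘ₗ (f₂.codRestrict U₁ hcod) with haEdef
        have hkey : ∀ w, f₁ (aE w) = f₂ w := by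
          intro w
          rw [haEdef, LinearMap.comp_apply, LinearEquiv.coe_toLinearMap]
          rw [LinearEquiv.ofInjective_symm_apply]
          rfl
        have haEcomm : ∀ h : H, aE * ρ h = ρ h * aE := by
          intro h
          ext w
          apply inj₁
          rw [Module.End.mul_apply, Module.End.mul_apply, hkey (ρ h w), hf₂M h w,
            ← hkey w, ← hf₁M h (aE w)]
        obtain ⟨μ, hμ⟩ := schur_scalar ρ hρ aE haEcomm
        refine ⟨μ, ?_⟩
        ext w
        rw [LinearMap.smul_apply, ← hkey w, hμ]
        simp


end RestrictionMult
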